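/- Let A be a bounded self-adjoint operator on a Hilbert space H with ‖Aψ‖ ≥ C‖ψ‖ for some C > 0 (i.e., A invertible), let F₂(u) = (1/2)⟨Au,u⟩, and let ψ(s,u) solve ψ' = -Aψ/‖Aψ‖ with ψ(0,u)=u. Then for 0 ≤ t < ‖u‖: F₂(u) - F₂(ψ(t,u)) = ∫₀^t ‖Aψ(s,u)‖ ds ≥ C(‖u‖ t - t²/2). In particular t ↦ F₂(ψ(t,u)) is strictly decreasing. -/

import Mathlib

open RealInnerProductSpace

/-- Along the normalized negative gradient flow `ψ' = -Aψ/‖Aψ‖` of the quadratic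
form `F₂(u) = (1/2)⟨Au,u⟩` of a bounded self-adjoint operator `A` with
`‖Aψ‖ ≥ C‖ψ‖`, `C > 0`, one has for `0 ≤ t < ‖u‖`:
`F₂(u) - F₂(ψ(t)) = ∫₀ᵗ ‖Aψ(s)‖ ds ≥ C(‖u‖ t - t²/2)`; in particular
`t ↦ F₂(ψ(t))` is strictly decreasing. -/
theorem quadratic_form_decreases_along_flow {H : Type*}
    [NormedAddCommGroup H] [InnerProductSpace ℝ H] [CompleteSpace H]
    (A : H →L[ℝ] H) (hsa : ∀ u v : H, ⟪A u, v⟫ = ⟪u, A v⟫)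
    (C : ℝ) (hC : 0 < C) (hinv : ∀ ψ : H, C * ‖ψ‖ ≤ ‖A ψ‖)
    (u : H) (hu : u ≠ 0) (ψ : ℝ → H) (hψ0 : ψ 0 = u)
    (hflow : ∀ s : ℝ, |s| < ‖u‖ → HasDerivAt ψ (-(‖A (ψ s)‖⁻¹ • A (ψ s))) s) :
    (∀ t : ℝ, 0 ≤ t → t < ‖u‖ →
      ((1/2 : ℝ) * ⟪A u, u⟫ - (1/2 : ℝ) * ⟪A (ψ t), ψ t⟫ =
        ∫ s in (0:ℝ)..t, ‖A (ψ s)‖) ∧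
      C * (‖u‖ * t - t^2 / 2) ≤ ∫ s in (0:ℝ)..t, ‖A (ψ s)‖) ∧
    (∀ t₁ t₂ : ℝ, 0 ≤ t₁ → t₁ < t₂ → t₂ < ‖u‖ →
      (1/2 : ℝ) * ⟪A (ψ t₂), ψ t₂⟫ < (1/2 : ℝ) * ⟪A (ψ t₁), ψ t₁⟫) := by
  set r := ‖u‖ with hr
  have key : ∀ t : ℝ, 0 ≤ t → t < r → ∀ s ∈ Set.Icc (0:ℝ) t, |s| < r := by
    intro t ht0 ht s hs
    rw [abs_of_nonneg hs.1]
    exact lt_of_le_of_lt hs.2 ht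
  -- norm lower bound along the flow
  have hnorm : ∀ t : ℝ, 0 ≤ t → t < r → r - t ≤ ‖ψ t‖ := by
    intro t ht0 ht
    have hd : ∀ s ∈ Set.Icc (0:ℝ) t,
        HasDerivWithinAt ψ (-(‖A (ψ s)‖⁻¹ • A (ψ s))) (Set.Icc 0 t) s :=
      fun s hs => (hflow s (key t ht0 ht s hs)).hasDerivWithinAt
    have hb : ∀ s ∈ Set.Icc (0:ℝ) t, ‖-(‖A (ψ s)‖⁻¹ • A (ψ s))‖ ≤ 1 := by
      intro s hs
      rw [norm_neg, norm_smul, norm_inv, norm_norm]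
      rcases eq_or_ne (‖A (ψ s)‖) 0 with h | h
      · simp [h]
      · rw [inv_mul_cancel₀ h]
    have hle := (convex_Icc (0:ℝ) t).norm_image_sub_le_of_norm_hasDerivWithin_le
      hd hb (Set.left_mem_Icc.mpr ht0) (Set.right_mem_Icc.mpr ht0)
    rw [hψ0] at hle
    have h1 : ‖u‖ - ‖ψ t‖ ≤ ‖ψ t - u‖ := by
      have := norm_sub_norm_le u (ψ t)
      rw [← norm_neg (u - ψ t)] at this
      simpa using this
    have h2 : ‖(t:ℝ) - 0‖ = t := by rw [sub_zero, Real.norm_eq_abs, abs_of_nonneg ht0]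
    rw [h2, one_mul] at hle
    linarith
  have hApos : ∀ t : ℝ, 0 ≤ t → t < r → C * (r - t) ≤ ‖A (ψ t)‖ := by
    intro t ht0 ht
    calc C * (r - t) ≤ C * ‖ψ t‖ := by
          have := hnorm t ht0 ht; nlinarith
      _ ≤ ‖A (ψ t)‖ := hinv (ψ t)
  have hAne : ∀ t : ℝ, 0 ≤ t → t < r → ‖A (ψ t)‖ ≠ 0 := by
    intro t ht0 ht
    have h1 : 0 < C * (r - t) := mul_pos hC (by linarith)
    have h2 := hApos t ht0 ht
    linarith
  -- derivative of F
  have hFderiv : ∀ s : ℝ, 0 ≤ s → s < r →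
      HasDerivAt (fun s => (1/2 : ℝ) * ⟪A (ψ s), ψ s⟫) (-‖A (ψ s)‖) s := by
    intro s hs0 hs
    have habs : |s| < r := by rwa [abs_of_nonneg hs0]
    have hψd := hflow s habs
    have hAd : HasDerivAt (fun x => A (ψ x)) (A (-(‖A (ψ s)‖⁻¹ • A (ψ s)))) s :=
      (A.hasFDerivAt.comp_hasDerivAt s hψd)
    have hi := (hAd.inner ℝ hψd).const_mul (1/2 : ℝ)
    refine hi.congr_deriv (Eq.symm ?_)
    have hne := hAne s hs0 hs
    have h1 : ⟪A (-(‖A (ψ s)‖⁻¹ • A (ψ s))), ψ s⟫ =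
        -(‖A (ψ s)‖⁻¹ * ⟪A (ψ s), A (ψ s)⟫) := by
      rw [hsa]
      simp [real_inner_smul_right, inner_neg_right, real_inner_comm]
    have h2 : ⟪A (ψ s), -(‖A (ψ s)‖⁻¹ • A (ψ s))⟫ =
        -(‖A (ψ s)‖⁻¹ * ⟪A (ψ s), A (ψ s)⟫) := by
      simp [real_inner_smul_right, inner_neg_right]
    rw [h1, h2, real_inner_self_eq_norm_sq]
    field_simp
    ring
  -- continuity / integrability
  have hcont : ∀ a b : ℝ, 0 ≤ a → b < r →
      ContinuousOn (fun s => ‖A (ψ s)‖) (Set.Icc a b) := by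
    intro a b ha hb s hs
    have habs : |s| < r := by
      rw [abs_of_nonneg (le_trans ha hs.1)]
      exact lt_of_le_of_lt hs.2 hb
    exact (((A.continuous.continuousAt).comp (hflow s habs).continuousAt).norm).continuousWithinAt
  have hintgr : ∀ a b : ℝ, 0 ≤ a → a ≤ b → b < r →
      IntervalIntegrable (fun s => ‖A (ψ s)‖) MeasureTheory.volume a b := by
    intro a b ha hab hb
    exact (hcont a b ha hb).intervalIntegrable_of_Icc hab
  -- FTC
  have main : ∀ a b : ℝ, 0 ≤ a → a ≤ b → b < r →
      (1/2 : ℝ) * ⟪A (ψ a), ψ a⟫ - (1/2 : ℝ) * ⟪A (ψ b), ψ b⟫ =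
        ∫ s in a..b, ‖A (ψ s)‖ := by
    intro a b ha hab hb
    have hderiv : ∀ x ∈ Set.uIcc a b,
        HasDerivAt (fun s => (1/2 : ℝ) * ⟪A (ψ s), ψ s⟫) (-‖A (ψ x)‖) x := by
      intro x hx
      rw [Set.uIcc_of_le hab] at hx
      exact hFderiv x (le_trans ha hx.1) (lt_of_le_of_lt hx.2 hb)
    have hint : IntervalIntegrable (fun s => -‖A (ψ s)‖) MeasureTheory.volume a b :=
      (hintgr a b ha hab hb).neg
    have := intervalIntegral.integral_eq_sub_of_hasDerivAt hderiv hint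
    rw [intervalIntegral.integral_neg] at this
    linarith
  -- lower bound on the integral
  have hbound : ∀ a b : ℝ, 0 ≤ a → a ≤ b → b < r →
      ∫ s in a..b, C * (r - s) ≤ ∫ s in a..b, ‖A (ψ s)‖ := by
    intro a b ha hab hb
    apply intervalIntegral.integral_mono_on hab
    · exact (continuous_const.mul (continuous_const.sub continuous_id)).intervalIntegrable a b
    · exact hintgr a b ha hab hb
    · intro x hx
      exact hApos x (le_trans ha hx.1) (lt_of_le_of_lt hx.2 hb)
  constructor
  · intro t ht0 ht
    constructor
    · have := main 0 t le_rfl ht0 ht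
      rwa [hψ0] at this
    · have h1 := hbound 0 t le_rfl ht0 ht
      have h2 : ∫ s in (0:ℝ)..t, C * (r - s) = C * (r * t - t^2/2) := by
        rw [intervalIntegral.integral_const_mul,
          intervalIntegral.integral_sub intervalIntegrable_const
            intervalIntegral.intervalIntegrable_id,
          intervalIntegral.integral_const, integral_id, smul_eq_mul]
        ring
      rw [h2] at h1
      exact h1
  · intro t₁ t₂ ht₁ h12 ht₂
    have hmain := main t₁ t₂ ht₁ h12.le ht₂
    have h1 := hbound t₁ t₂ ht₁ h12.le ht₂
    have h2 : (t₂ - t₁) * (C * (r - t₂)) ≤ ∫ s in t₁..t₂, C * (r - s) := by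
      have h3 : ∫ s in t₁..t₂, C * (r - t₂) ≤ ∫ s in t₁..t₂, C * (r - s) := by
        apply intervalIntegral.integral_mono_on h12.le
        · exact intervalIntegrable_const
        · exact (continuous_const.mul (continuous_const.sub continuous_id)).intervalIntegrable t₁ t₂
        · intro x hx; nlinarith [hx.2, hC.le]
      rwa [intervalIntegral.integral_const, smul_eq_mul] at h3
    have hpos : 0 < (t₂ - t₁) * (C * (r - t₂)) := mul_pos (by linarith) (mul_pos hC (by linarith))
    linarith
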